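/- Let γ > 0, let R ≥ 600·(γ^{3/4} + γ^{−3/4}), and let j ≥ 1 be an integer. Then the equation w = G_{j,R}(w) has exactly one solution in F_∞, and this solution lies in F_j. Moreover, for distinct integers j, j′ ≥ 1, the corresponding solutions are distinct. -/

import Mathlib

/-- The argument in `[-π, π)`: it agrees with the principal argument `Complex.arg`
except on the negative real axis, where it takes the value `-π`. -/
noncomputable def argm (ζ : ℂ) : ℝ :=
  if Complex.arg ζ = Real.pi then -Real.pi else Complex.arg ζ

/-- The branch `sq₋` of the square root with branch cut along the negative real axis:
`sq₋(ζ) = √|ζ|·exp(i·arg₋(ζ)/2)`. -/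
noncomputable def sqm (ζ : ℂ) : ℂ :=
  (Real.sqrt ‖ζ‖ : ℂ) * Complex.exp (Complex.I * (argm ζ) / 2)

/-- The closed sector `F_∞ = {w : Re w ≤ 0 ≤ Im w, |Re w| ≥ 2·Im w}`. -/
def Finf : Set ℂ := {w : ℂ | w.re ≤ 0 ∧ 0 ≤ w.im ∧ 2 * w.im ≤ |w.re|}

/-- `h(w) = (sq₋(w² + iγ) − w)/(sq₋(w² + iγ) + w)`. -/
noncomputable def hfun (γ : ℝ) (w : ℂ) : ℂ :=
  (sqm (w ^ 2 + Complex.I * γ) - w) / (sqm (w ^ 2 + Complex.I * γ) + w)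

/-- `A(w) = log|h(w)|`. -/
noncomputable def Afun (γ : ℝ) (w : ℂ) : ℝ := Real.log ‖hfun γ w‖

/-- `B_j(w) = arg₋(h(w)) + 2πj`. -/
noncomputable def Bfun (γ : ℝ) (j : ℤ) (w : ℂ) : ℝ := argm (hfun γ w) + 2 * Real.pi * j

/-- `G_{j,R}(w) = (−B_j(w) + i·A(w))/(2R)`. -/
noncomputable def Gfun (γ : ℝ) (j : ℤ) (R : ℝ) (w : ℂ) : ℂ :=
  (-(Bfun γ j w : ℂ) + Complex.I * (Afun γ w : ℂ)) / (2 * (R : ℂ))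

/-- `F_j = {w ∈ F_∞ : B_j(w) ≥ 2·|A(w)|}`. -/
noncomputable def Fj (γ : ℝ) (j : ℤ) : Set ℂ :=
  {w ∈ Finf | 2 * |Afun γ w| ≤ Bfun γ j w}

open Complex

lemma argm_eq_arg {z : ℂ} (h : Complex.arg z ≠ Real.pi) : argm z = Complex.arg z := if_neg h

lemma sqm_eq_exp_log {z : ℂ} (h : z ∈ Complex.slitPlane) :
    sqm z = Complex.exp (Complex.log z / 2) := by
  have hz : z ≠ 0 := Complex.slitPlane_ne_zero h
  have habs : 0 < ‖z‖ := norm_pos_iff.mpr hz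
  have harg : Complex.arg z ≠ Real.pi := by
    intro hp
    rw [Complex.arg_eq_pi_iff] at hp
    exact Complex.mem_slitPlane_iff.mp h |>.elim (fun h1 => absurd hp.1 (not_lt.mpr h1.le))
      (fun h2 => h2 hp.2)
  rw [sqm, argm_eq_arg harg, Complex.log]
  rw [add_div, Complex.exp_add]
  congr 1
  · rw [show (↑(Real.log (‖z‖)) : ℂ) / 2 = ((Real.log (‖z‖) / 2 : ℝ) : ℂ) by push_cast; ring]
    rw [← Complex.ofReal_exp]
    congr 1
    rw [Real.sqrt_eq_rpow, Real.rpow_def_of_pos habs]; ring_nf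
  · congr 1; ring

lemma sqm_sq {z : ℂ} (h : z ∈ Complex.slitPlane) : (sqm z)^2 = z := by
  rw [sqm_eq_exp_log h, ← Complex.exp_nat_mul,
    show ((2:ℕ):ℂ) * (Complex.log z / 2) = Complex.log z by push_cast; ring,
    Complex.exp_log (Complex.slitPlane_ne_zero h)]

lemma abs_sqm (z : ℂ) : ‖sqm z‖ = Real.sqrt (‖z‖) := by
  rw [sqm, show Complex.I * ((argm z : ℝ):ℂ)/2 = ((argm z/2 : ℝ):ℂ) * Complex.I by push_cast; ring,
    norm_mul, Complex.norm_exp_ofReal_mul_I, Complex.norm_real, Real.norm_eq_abs,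
    _root_.abs_of_nonneg (Real.sqrt_nonneg _), mul_one]

lemma argm_lt_pi (z : ℂ) : argm z < Real.pi := by
  rw [argm]
  split
  · linarith [Real.pi_pos]
  · exact lt_of_le_of_ne (Complex.arg_le_pi z) (by assumption)

lemma neg_pi_le_argm (z : ℂ) : -Real.pi ≤ argm z := by
  rw [argm]
  split
  · exact le_refl _
  · exact (Complex.neg_pi_lt_arg z).le

lemma re_sqm_nonneg (z : ℂ) : 0 ≤ (sqm z).re := by
  rw [sqm, show Complex.I * ((argm z : ℝ):ℂ)/2 = ((argm z/2 : ℝ):ℂ) * Complex.I by push_cast; ring,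
    Complex.re_ofReal_mul, Complex.exp_ofReal_mul_I_re]
  have h1 := argm_lt_pi z
  have h2 := neg_pi_le_argm z
  have : 0 ≤ Real.cos (argm z / 2) := by
    apply Real.cos_nonneg_of_mem_Icc
    constructor <;> [linarith; linarith]
  positivity

lemma abs_im_sqm_le {z : ℂ} (hz : z ∈ Complex.slitPlane) (hre : 0 ≤ z.re) :
    |(sqm z).im| ≤ (sqm z).re := by
  have h2 := sqm_sq hz
  have h3 := re_sqm_nonneg z
  have h4 : ((sqm z)^2).re = (sqm z).re^2 - (sqm z).im^2 := by
    simp [pow_two, Complex.mul_re]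
  rw [h2] at h4
  rw [abs_le]
  constructor <;> nlinarith

section FinfFacts

variable {γ : ℝ} {w : ℂ}

lemma finf_im2 (hw : w ∈ Finf) : 2 * w.im ≤ -w.re := by
  have := hw.2.2; rwa [abs_of_nonpos hw.1] at this

lemma zeta_re : (w^2 + Complex.I*γ).re = w.re^2 - w.im^2 := by
  simp [pow_two, Complex.add_re, Complex.mul_re]

lemma zeta_im : (w^2 + Complex.I*γ).im = 2*w.re*w.im + γ := by
  simp [pow_two, Complex.add_im, Complex.mul_im]; ring

lemma zeta_re_nonneg (hw : w ∈ Finf) : 0 ≤ (w^2 + Complex.I*γ).re := by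
  rw [zeta_re]
  have h1 := hw.2.1
  have h2 := finf_im2 hw
  nlinarith

lemma zeta_mem (hγ : 0 < γ) (hw : w ∈ Finf) : (w^2 + Complex.I*γ) ∈ Complex.slitPlane := by
  rw [Complex.mem_slitPlane_iff]
  rcases lt_or_eq_of_le (zeta_re_nonneg (γ := γ) hw) with h | h
  · exact Or.inl h
  · right
    rw [zeta_im]
    have h1 := hw.2.1
    have h2 := finf_im2 hw
    have hre0 : w.re^2 - w.im^2 = 0 := by rw [← zeta_re (γ := γ)]; linarith [h.symm]
    have him : w.im = 0 := by nlinarith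
    have hre : w.re = 0 := by nlinarith
    rw [him, hre]; positivity

lemma zeta_abs_ge (hγ : 0 < γ) (hw : w ∈ Finf) : γ/4 ≤ ‖w^2 + Complex.I*γ‖ := by
  have h1 := hw.2.1
  have h2 := finf_im2 hw
  have hre : (w^2 + Complex.I*γ).re ≤ ‖w^2 + Complex.I*γ‖ := Complex.re_le_norm _
  have him : |(w^2 + Complex.I*γ).im| ≤ ‖w^2 + Complex.I*γ‖ := Complex.abs_im_le_norm _
  rw [zeta_re] at hre
  rw [zeta_im] at him
  by_cases hc : -(2*w.re*w.im) ≤ γ/2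
  · have : γ/2 ≤ |2*w.re*w.im + γ| := by
      rw [_root_.abs_of_nonneg (by linarith)]; linarith
    linarith
  · push_neg at hc
    have ht : γ/2 < w.re^2 := by nlinarith
    nlinarith

end FinfFacts

section HFacts

variable {γ : ℝ} {w : ℂ}

lemma Igamma_ne (hγ : 0 < γ) : Complex.I * (γ:ℂ) ≠ 0 := by
  simp [Complex.ext_iff, Complex.I_ne_zero, hγ.ne']

lemma sq_sub_mul_add (hγ : 0 < γ) (hw : w ∈ Finf) :
    (sqm (w^2 + Complex.I*γ) - w) * (sqm (w^2 + Complex.I*γ) + w) = Complex.I*γ := by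
  have h := sqm_sq (zeta_mem hγ hw)
  linear_combination h

lemma sub_ne (hγ : 0 < γ) (hw : w ∈ Finf) : sqm (w^2 + Complex.I*γ) - w ≠ 0 := by
  intro h
  have := sq_sub_mul_add hγ hw
  rw [h, zero_mul] at this
  exact Igamma_ne hγ this.symm

lemma add_ne (hγ : 0 < γ) (hw : w ∈ Finf) : sqm (w^2 + Complex.I*γ) + w ≠ 0 := by
  intro h
  have := sq_sub_mul_add hγ hw
  rw [h, mul_zero] at this
  exact Igamma_ne hγ this.symm

lemma hfun_eq (hγ : 0 < γ) (hw : w ∈ Finf) :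
    hfun γ w = (sqm (w^2 + Complex.I*γ) - w)^2 / (Complex.I*γ) := by
  rw [hfun, div_eq_div_iff (add_ne hγ hw) (Igamma_ne hγ)]
  linear_combination (w - sqm (w^2 + Complex.I*γ)) * sq_sub_mul_add hγ hw

lemma hfun_mul (hγ : 0 < γ) (hw : w ∈ Finf) :
    hfun γ w * (Complex.I*γ) = (sqm (w^2 + Complex.I*γ) - w) * (sqm (w^2 + Complex.I*γ) - w) := by
  rw [hfun_eq hγ hw, div_mul_cancel₀ _ (Igamma_ne hγ), pow_two]

lemma hfun_re (hγ : 0 < γ) (hw : w ∈ Finf) :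
    (hfun γ w).re = 2 * (sqm (w^2 + Complex.I*γ) - w).re * (sqm (w^2 + Complex.I*γ) - w).im / γ := by
  have h := congrArg Complex.im (hfun_mul hγ hw)
  simp only [Complex.mul_im, Complex.mul_re, Complex.sub_re, Complex.sub_im, Complex.I_re,
    Complex.I_im, Complex.ofReal_re, Complex.ofReal_im] at h
  field_simp
  simp only [Complex.sub_re, Complex.sub_im]
  nlinarith [h]

lemma hfun_im (hγ : 0 < γ) (hw : w ∈ Finf) :
    (hfun γ w).im = ((sqm (w^2 + Complex.I*γ) - w).im^2 - (sqm (w^2 + Complex.I*γ) - w).re^2) / γ := by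
  have h := congrArg Complex.re (hfun_mul hγ hw)
  simp only [Complex.mul_im, Complex.mul_re, Complex.sub_re, Complex.sub_im, Complex.I_re,
    Complex.I_im, Complex.ofReal_re, Complex.ofReal_im] at h
  field_simp
  simp only [Complex.sub_re, Complex.sub_im]
  nlinarith [h]

lemma sub_re_nonneg (hγ : 0 < γ) (hw : w ∈ Finf) : 0 ≤ (sqm (w^2 + Complex.I*γ) - w).re := by
  rw [Complex.sub_re]
  have := re_sqm_nonneg (w^2 + Complex.I*γ)
  linarith [hw.1]

lemma sub_abs_im_le (hγ : 0 < γ) (hw : w ∈ Finf) :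
    |(sqm (w^2 + Complex.I*γ) - w).im| ≤ (sqm (w^2 + Complex.I*γ) - w).re := by
  have h1 := abs_im_sqm_le (zeta_mem hγ hw) (zeta_re_nonneg hw)
  have h2 := hw.2.1
  have h3 := finf_im2 hw
  rw [Complex.sub_re, Complex.sub_im]
  rw [abs_le] at h1 ⊢
  constructor <;> [nlinarith [h1.1, h1.2]; nlinarith [h1.1, h1.2]]

lemma hfun_im_nonpos (hγ : 0 < γ) (hw : w ∈ Finf) : (hfun γ w).im ≤ 0 := by
  rw [hfun_im hγ hw]
  have h1 := sub_abs_im_le hγ hw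
  have h2 := abs_nonneg (sqm (w^2 + Complex.I*γ) - w).im
  apply div_nonpos_of_nonpos_of_nonneg _ hγ.le
  nlinarith [le_abs_self (sqm (w^2 + Complex.I*γ) - w).im, neg_abs_le (sqm (w^2 + Complex.I*γ) - w).im]

end HFacts

section HFacts2

variable {γ : ℝ} {w : ℂ}

lemma hfun_mem_slit (hγ : 0 < γ) (hw : w ∈ Finf) : hfun γ w ∈ Complex.slitPlane := by
  have hx := sub_re_nonneg hγ hw
  have hyx := sub_abs_im_le hγ hw
  have hfr := hfun_re hγ hw
  have hfi := hfun_im hγ hw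
  have hzne := sub_ne hγ hw
  have hsre := abs_im_sqm_le (zeta_mem hγ hw) (zeta_re_nonneg hw)
  have h1 := hw.2.1
  have h2 := finf_im2 hw
  set s := sqm (w^2 + Complex.I*γ) with hs
  rw [Complex.mem_slitPlane_iff]
  by_contra hcon
  push_neg at hcon
  obtain ⟨hre, him⟩ := hcon
  rw [hfi] at him
  rw [hfr] at hre
  set x := (s - w).re
  set y := (s - w).im
  have hysq : y^2 = x^2 := by
    field_simp at him; linarith
  have hxy : x * y ≤ 0 := by
    by_contra hpos
    push_neg at hpos
    have : 0 < 2 * x * y / γ := div_pos (by linarith) hγ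
    linarith
  have hxpos : 0 < x ∨ (x = 0 ∧ y = 0) := by
    rcases lt_or_eq_of_le hx with h | h
    · exact Or.inl h
    · right
      refine ⟨h.symm, ?_⟩
      rw [abs_le] at hyx
      nlinarith [hyx.1, hyx.2]
  rcases hxpos with hxp | ⟨hx0, hy0⟩
  · have hy : y = -x := by
      rcases abs_le.mp hyx with ⟨ha, hb⟩
      have hsum0 : (x - y) * (x + y) = 0 := by linear_combination (-1 : ℝ) * hysq
      rcases mul_eq_zero.mp hsum0 with h5 | h5
      · nlinarith [mul_pos hxp hxp]
      · linarith
    -- now s.re + s.im = w.re + w.im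
    have hxdef : x = s.re - w.re := by simp [x, Complex.sub_re]
    have hydef : y = s.im - w.im := by simp [y, Complex.sub_im]
    have hsum : s.re + s.im = w.re + w.im := by
      rw [hxdef, hydef] at hy; linarith
    rw [abs_le] at hsre
    have hwre : w.re = 0 := by nlinarith [hsre.1, hsre.2]
    have hwim : w.im = 0 := by nlinarith
    have hsq := congrArg Complex.im (sqm_sq (zeta_mem hγ hw))
    rw [pow_two, Complex.mul_im, zeta_im, hwre, hwim] at hsq
    -- 2 s.re s.im = γ, but s.im = -s.re
    nlinarith [hsq, hsre.1, hsre.2]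
  · apply hzne
    rw [Complex.ext_iff]
    exact ⟨by simp only [Complex.zero_re]; exact hx0, by simp only [Complex.zero_im]; exact hy0⟩

lemma hfun_ne_zero (hγ : 0 < γ) (hw : w ∈ Finf) : hfun γ w ≠ 0 :=
  Complex.slitPlane_ne_zero (hfun_mem_slit hγ hw)

lemma abs_hfun_eq (hγ : 0 < γ) (hw : w ∈ Finf) :
    ‖hfun γ w‖ = (‖sqm (w^2 + Complex.I*γ) - w‖)^2 / γ := by
  rw [hfun_eq hγ hw, norm_div, norm_pow, norm_mul, Complex.norm_I, Complex.norm_real, Real.norm_eq_abs, one_mul,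
    _root_.abs_of_pos hγ]

lemma abs_mul_abs_eq (hγ : 0 < γ) (hw : w ∈ Finf) :
    ‖sqm (w^2 + Complex.I*γ) - w‖ * ‖sqm (w^2 + Complex.I*γ) + w‖ = γ := by
  rw [← norm_mul, sq_sub_mul_add hγ hw, norm_mul, Complex.norm_I, Complex.norm_real, Real.norm_eq_abs, one_mul,
    _root_.abs_of_pos hγ]

lemma abs_add_le_abs_sub (hγ : 0 < γ) (hw : w ∈ Finf) :
    ‖sqm (w^2 + Complex.I*γ) + w‖ ≤ ‖sqm (w^2 + Complex.I*γ) - w‖ := by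
  have hsre := abs_im_sqm_le (zeta_mem hγ hw) (zeta_re_nonneg hw)
  have hsre0 := re_sqm_nonneg (w^2 + Complex.I*γ)
  have h1 := hw.2.1
  have h2 := finf_im2 hw
  set s := sqm (w^2 + Complex.I*γ) with hs
  rw [abs_le] at hsre
  have hsq : (‖s + w‖)^2 ≤ (‖s - w‖)^2 := by
    rw [Complex.sq_norm, Complex.sq_norm, Complex.normSq_apply, Complex.normSq_apply,
      Complex.add_re, Complex.add_im, Complex.sub_re, Complex.sub_im]
    nlinarith [mul_nonneg (by linarith : (0:ℝ) ≤ s.re - s.im) h1,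
      mul_nonneg hsre0 (by linarith : (0:ℝ) ≤ -w.re - w.im)]
  exact (pow_le_pow_iff_left₀ (norm_nonneg _) (norm_nonneg _) two_ne_zero).mp hsq

lemma one_le_abs_hfun (hγ : 0 < γ) (hw : w ∈ Finf) : 1 ≤ ‖hfun γ w‖ := by
  rw [abs_hfun_eq hγ hw, le_div_iff₀ hγ, one_mul]
  have h1 := abs_mul_abs_eq hγ hw
  have h2 := abs_add_le_abs_sub hγ hw
  have h3 := norm_nonneg (sqm (w^2 + Complex.I*γ) - w)
  nlinarith

lemma Afun_nonneg (hγ : 0 < γ) (hw : w ∈ Finf) : 0 ≤ Afun γ w :=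
  Real.log_nonneg (one_le_abs_hfun hγ hw)

lemma abs_sub_le' (hγ : 0 < γ) (hw : w ∈ Finf) :
    ‖sqm (w^2 + Complex.I*γ) - w‖ ≤ Real.sqrt γ + 2 * ‖w‖ := by
  have h1 : ‖sqm (w^2 + Complex.I*γ) - w‖ ≤
      ‖sqm (w^2 + Complex.I*γ)‖ + ‖w‖ := by
    simpa using norm_sub_le (sqm (w^2 + Complex.I*γ)) w
  have h2 : ‖w^2 + Complex.I*γ‖ ≤ (‖w‖)^2 + γ := by
    calc ‖w^2 + Complex.I*γ‖ ≤ ‖w^2‖ + ‖Complex.I*γ‖ :=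
          norm_add_le _ _
    _ = (‖w‖)^2 + γ := by
        rw [norm_pow, norm_mul, Complex.norm_I, Complex.norm_real, Real.norm_eq_abs, one_mul, _root_.abs_of_pos hγ]
  have h3 : ‖sqm (w^2 + Complex.I*γ)‖ ≤ ‖w‖ + Real.sqrt γ := by
    rw [abs_sqm]
    have h4 : (‖w‖)^2 + γ ≤ (‖w‖ + Real.sqrt γ)^2 := by
      nlinarith [Real.sq_sqrt hγ.le, Real.sqrt_nonneg γ, norm_nonneg w]
    calc Real.sqrt (‖w^2 + Complex.I*γ‖) ≤
        Real.sqrt ((‖w‖ + Real.sqrt γ)^2) := Real.sqrt_le_sqrt (by linarith)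
    _ = ‖w‖ + Real.sqrt γ := Real.sqrt_sq (by positivity)
  linarith

lemma Afun_le (hγ : 0 < γ) (hw : w ∈ Finf) :
    Afun γ w ≤ 4 * ‖w‖ / Real.sqrt γ := by
  have hsg : 0 < Real.sqrt γ := Real.sqrt_pos.mpr hγ
  set d : ℝ := 2 * ‖w‖ / Real.sqrt γ with hd
  have hd0 : 0 ≤ d := by positivity
  have habs : ‖hfun γ w‖ ≤ (1 + d)^2 := by
    rw [abs_hfun_eq hγ hw, div_le_iff₀ hγ]
    have h1 := abs_sub_le' hγ hw
    have h2 : Real.sqrt γ * (1 + d) = Real.sqrt γ + 2 * ‖w‖ := by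
      rw [hd, mul_add, mul_one, mul_div_cancel₀ _ hsg.ne']
    have h3 : ‖sqm (w^2 + Complex.I*γ) - w‖ ≤ Real.sqrt γ * (1 + d) := by
      rw [h2]; exact h1
    nlinarith [norm_nonneg (sqm (w^2 + Complex.I*γ) - w), Real.sq_sqrt hγ.le,
      Real.sqrt_nonneg γ, hd0]
  have hlog : Afun γ w ≤ Real.log ((1 + d)^2) := by
    rw [Afun]
    apply Real.log_le_log (by linarith [one_le_abs_hfun hγ hw]) habs
  calc Afun γ w ≤ Real.log ((1 + d)^2) := hlog
  _ = 2 * Real.log (1 + d) := by rw [Real.log_pow]; push_cast; ring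
  _ ≤ 2 * d := by
      have := Real.log_le_sub_one_of_pos (by linarith : (0:ℝ) < 1 + d)
      linarith
  _ = 4 * ‖w‖ / Real.sqrt γ := by rw [hd]; ring

lemma arg_hfun_nonpos (hγ : 0 < γ) (hw : w ∈ Finf) : (hfun γ w).arg ≤ 0 := by
  have him := hfun_im_nonpos hγ hw
  rcases lt_or_eq_of_le him with h | h
  · exact (Complex.arg_neg_iff.mpr h).le
  · have hslit := hfun_mem_slit hγ hw
    rw [Complex.mem_slitPlane_iff] at hslit
    have hre : 0 ≤ (hfun γ w).re := by
      rcases hslit with h' | h'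
      · exact h'.le
      · exact absurd h h'
    have : (hfun γ w).arg = 0 := Complex.arg_eq_zero_iff.mpr ⟨hre, h⟩
    linarith

lemma argm_hfun (hγ : 0 < γ) (hw : w ∈ Finf) : argm (hfun γ w) = (hfun γ w).arg := by
  apply argm_eq_arg
  intro h
  have := arg_hfun_nonpos hγ hw
  rw [h] at this
  linarith [Real.pi_pos]

end HFacts2

section GFacts

variable {γ R : ℝ} {w : ℂ} {j : ℤ}

lemma Gfun_re (γ : ℝ) (j : ℤ) (R : ℝ) (w : ℂ) :
    (Gfun γ j R w).re = -(Bfun γ j w) / (2*R) := by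
  rw [Gfun, show (2*(R:ℂ)) = ((2*R : ℝ) : ℂ) by push_cast; ring, Complex.div_ofReal_re]
  simp

lemma Gfun_im (γ : ℝ) (j : ℤ) (R : ℝ) (w : ℂ) :
    (Gfun γ j R w).im = Afun γ w / (2*R) := by
  rw [Gfun, show (2*(R:ℂ)) = ((2*R : ℝ) : ℂ) by push_cast; ring, Complex.div_ofReal_im]
  simp

lemma Gfun_eq_log (hγ : 0 < γ) (hw : w ∈ Finf) (j : ℤ) (R : ℝ) :
    Gfun γ j R w = (Complex.I * Complex.log (hfun γ w) - 2*Real.pi*(j:ℂ)) / (2*(R:ℂ)) := by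
  have hnum : -((Bfun γ j w : ℝ):ℂ) + Complex.I * ((Afun γ w : ℝ):ℂ)
      = Complex.I * Complex.log (hfun γ w) - 2*Real.pi*(j:ℂ) := by
    rw [Bfun, Afun, argm_hfun hγ hw]
    apply Complex.ext <;>
      simp [Complex.log_re, Complex.log_im, Complex.add_re, Complex.add_im,
        Complex.mul_re, Complex.mul_im, Complex.sub_re, Complex.sub_im] <;> ring
  rw [Gfun, hnum]

lemma Bfun_lb (hγ : 0 < γ) (hw : w ∈ Finf) (hj : 1 ≤ j) : Real.pi * j ≤ Bfun γ j w := by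
  rw [Bfun, argm_hfun hγ hw]
  have h1 := Complex.neg_pi_lt_arg (hfun γ w)
  have hπ := Real.pi_pos
  have hj' : (1:ℝ) ≤ (j:ℝ) := by exact_mod_cast hj
  nlinarith

lemma Bfun_ub (hγ : 0 < γ) (hw : w ∈ Finf) : Bfun γ j w ≤ 2 * Real.pi * j := by
  rw [Bfun, argm_hfun hγ hw]
  have := arg_hfun_nonpos hγ hw
  linarith

lemma Bfun_pos (hγ : 0 < γ) (hw : w ∈ Finf) (hj : 1 ≤ j) : 0 < Bfun γ j w := by
  have := Bfun_lb hγ hw hj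
  have hπ := Real.pi_pos
  have hj' : (1:ℝ) ≤ (j:ℝ) := by exact_mod_cast hj
  nlinarith

end GFacts

section Deriv

variable {γ R : ℝ} {w : ℂ} {j : ℤ}

lemma sqm_zeta_ne (hγ : 0 < γ) (hw : w ∈ Finf) : sqm (w^2 + Complex.I*γ) ≠ 0 := by
  have hζne : (w^2 + Complex.I*γ) ≠ 0 := Complex.slitPlane_ne_zero (zeta_mem hγ hw)
  intro h
  apply hζne
  rw [← sqm_sq (zeta_mem hγ hw), h]
  ring

lemma hasDerivAt_loghfun (hγ : 0 < γ) (hw : w ∈ Finf) :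
    HasDerivAt (fun w => Complex.log (hfun γ w)) (-2 / sqm (w^2 + Complex.I*γ)) w := by
  have hζmem := zeta_mem hγ hw
  have hsq := sqm_sq hζmem
  have hsne := sqm_zeta_ne hγ hw
  have haddne := add_ne hγ hw
  have hsubne := sub_ne hγ hw
  set s := sqm (w^2 + Complex.I*γ) with hs
  have hζ : HasDerivAt (fun w : ℂ => w^2 + Complex.I*γ) (2*w) w := by
    simpa using (hasDerivAt_pow 2 w).add_const (Complex.I*(γ:ℂ))
  have hlogζ : HasDerivAt (fun w : ℂ => Complex.log (w^2 + Complex.I*γ))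
      ((w^2 + Complex.I*γ)⁻¹ * (2*w)) w := by
    have := (Complex.hasDerivAt_log hζmem).comp w hζ; exact this
  have hΦ : HasDerivAt (fun w : ℂ => Complex.exp (Complex.log (w^2 + Complex.I*γ) / 2))
      (Complex.exp (Complex.log (w^2 + Complex.I*γ) / 2) *
        ((w^2 + Complex.I*γ)⁻¹ * (2*w) / 2)) w := (hlogζ.div_const 2).cexp
  have hΦw : Complex.exp (Complex.log (w^2 + Complex.I*γ) / 2) = s := (sqm_eq_exp_log hζmem).symm
  rw [hΦw] at hΦ
  set c : ℂ := (w^2 + Complex.I*γ)⁻¹ * (2*w) / 2 with hc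
  have hnum : HasDerivAt (fun w : ℂ =>
      Complex.exp (Complex.log (w^2 + Complex.I*γ) / 2) - w) (s * c - 1) w :=
    hΦ.sub (hasDerivAt_id w)
  have hden : HasDerivAt (fun w : ℂ =>
      Complex.exp (Complex.log (w^2 + Complex.I*γ) / 2) + w) (s * c + 1) w :=
    hΦ.add (hasDerivAt_id w)
  have hdenne : Complex.exp (Complex.log (w^2 + Complex.I*γ) / 2) + w ≠ 0 := by
    rw [hΦw]; exact haddne
  have hH : HasDerivAt (fun w : ℂ =>
      (Complex.exp (Complex.log (w^2 + Complex.I*γ) / 2) - w) /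
        (Complex.exp (Complex.log (w^2 + Complex.I*γ) / 2) + w))
      (((s * c - 1) * (s + w) - (s - w) * (s * c + 1)) / (s + w)^2) w := by
    have := hnum.div hden hdenne
    rw [hΦw] at this
    exact this
  have hHw : (Complex.exp (Complex.log (w^2 + Complex.I*γ) / 2) - w) /
      (Complex.exp (Complex.log (w^2 + Complex.I*γ) / 2) + w) = hfun γ w := by
    rw [hΦw, hfun]
  have hmemh : (Complex.exp (Complex.log (w^2 + Complex.I*γ) / 2) - w) /
      (Complex.exp (Complex.log (w^2 + Complex.I*γ) / 2) + w) ∈ Complex.slitPlane := by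
    rw [hHw]; exact hfun_mem_slit hγ hw
  have hlogH := (Complex.hasDerivAt_log hmemh).comp w hH
  have hev : (fun w => Complex.log (hfun γ w)) =ᶠ[nhds w]
      (fun w => Complex.log ((Complex.exp (Complex.log (w^2 + Complex.I*γ) / 2) - w) /
        (Complex.exp (Complex.log (w^2 + Complex.I*γ) / 2) + w))) := by
    have hcont : ContinuousAt (fun w : ℂ => w^2 + Complex.I*(γ:ℂ)) w := hζ.continuousAt
    filter_upwards [hcont.eventually_mem (Complex.isOpen_slitPlane.mem_nhds hζmem)] with x hx
    rw [hfun, sqm_eq_exp_log hx]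
  have hfinal := hlogH.congr_of_eventuallyEq hev
  refine hfinal.congr_deriv ?_
  have hsc : s * c = w / s := by
    rw [hc, ← hsq]
    field_simp
  rw [hΦw, hsc]
  field_simp
  ring

section Infra

variable {γ R : ℝ} {w : ℂ} {j : ℤ}

lemma Rpos (hγ : 0 < γ) (hR : 600 * (γ ^ ((3:ℝ)/4) + γ ^ (-(3:ℝ)/4)) ≤ R) : 0 < R := by
  have h1 : (0:ℝ) < γ ^ ((3:ℝ)/4) := Real.rpow_pos_of_pos hγ _
  have h2 : (0:ℝ) < γ ^ (-(3:ℝ)/4) := Real.rpow_pos_of_pos hγ _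
  nlinarith

lemma R_sqrt_ge (hγ : 0 < γ) (hR : 600 * (γ ^ ((3:ℝ)/4) + γ ^ (-(3:ℝ)/4)) ≤ R) :
    600 ≤ R * Real.sqrt γ := by
  have hsg : 0 < Real.sqrt γ := Real.sqrt_pos.mpr hγ
  have hmul := mul_le_mul_of_nonneg_right hR hsg.le
  have hkey : (γ ^ ((3:ℝ)/4) + γ ^ (-(3:ℝ)/4)) * Real.sqrt γ
      = γ ^ ((5:ℝ)/4) + γ ^ (-(1:ℝ)/4) := by
    rw [Real.sqrt_eq_rpow, add_mul, ← Real.rpow_add hγ, ← Real.rpow_add hγ]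
    norm_num
  have hone : (1:ℝ) ≤ γ ^ ((5:ℝ)/4) + γ ^ (-(1:ℝ)/4) := by
    rcases le_or_gt 1 γ with h | h
    · have : (1:ℝ) ≤ γ ^ ((5:ℝ)/4) := Real.one_le_rpow h (by norm_num)
      have := Real.rpow_pos_of_pos hγ (-(1:ℝ)/4)
      linarith
    · have : (1:ℝ) ≤ γ ^ (-(1:ℝ)/4) := by
        apply Real.one_le_rpow_of_pos_of_le_one_of_nonpos hγ h.le (by norm_num)
      have := Real.rpow_pos_of_pos hγ ((5:ℝ)/4)
      linarith
  calc (600:ℝ) = 600 * 1 := by norm_num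
  _ ≤ 600 * (γ ^ ((5:ℝ)/4) + γ ^ (-(1:ℝ)/4)) := by linarith
  _ = 600 * ((γ ^ ((3:ℝ)/4) + γ ^ (-(3:ℝ)/4)) * Real.sqrt γ) := by rw [hkey]
  _ ≤ R * Real.sqrt γ := by nlinarith

lemma convex_Finf : Convex ℝ Finf := by
  intro x hx y hy a b ha hb hab
  obtain ⟨hx1, hx2, hx3⟩ := hx
  obtain ⟨hy1, hy2, hy3⟩ := hy
  rw [abs_of_nonpos hx1] at hx3
  rw [abs_of_nonpos hy1] at hy3
  have hre : (a • x + b • y).re = a * x.re + b * y.re := by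
    simp [Complex.real_smul, Complex.add_re, Complex.mul_re]
  have him : (a • x + b • y).im = a * x.im + b * y.im := by
    simp [Complex.real_smul, Complex.add_im, Complex.mul_im]
  refine ⟨?_, ?_, ?_⟩
  · rw [hre]; nlinarith
  · rw [him]; nlinarith
  · rw [hre, him, abs_of_nonpos (by nlinarith)]
    nlinarith

lemma closed_Finf : IsClosed Finf := by
  have h1 : IsClosed {w : ℂ | w.re ≤ 0} := isClosed_le Complex.continuous_re continuous_const
  have h2 : IsClosed {w : ℂ | 0 ≤ w.im} := isClosed_le continuous_const Complex.continuous_im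
  have h3 : IsClosed {w : ℂ | 2*w.im ≤ |w.re|} :=
    isClosed_le ((continuous_const).mul Complex.continuous_im) Complex.continuous_re.abs
  have : Finf = {w : ℂ | w.re ≤ 0} ∩ ({w : ℂ | 0 ≤ w.im} ∩ {w : ℂ | 2*w.im ≤ |w.re|}) := by
    ext w
    simp only [Finf, Set.mem_setOf_eq, Set.mem_inter_iff]
  rw [this]
  exact h1.inter (h2.inter h3)

lemma zero_mem_Finf : (0:ℂ) ∈ Finf := by
  refine ⟨?_, ?_, ?_⟩ <;> simp

lemma abs_sqm_ge (hγ : 0 < γ) (hw : w ∈ Finf) :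
    Real.sqrt γ / 2 ≤ ‖sqm (w^2 + Complex.I*γ)‖ := by
  rw [abs_sqm]
  have h1 := zeta_abs_ge hγ (γ := γ) hw
  have h2 : Real.sqrt (γ/4) = Real.sqrt γ / 2 := by
    rw [Real.sqrt_div hγ.le, show Real.sqrt 4 = 2 by
      rw [show (4:ℝ) = 2^2 by norm_num, Real.sqrt_sq (by norm_num : (0:ℝ) ≤ 2)]]
  calc Real.sqrt γ / 2 = Real.sqrt (γ/4) := h2.symm
  _ ≤ Real.sqrt (‖w^2 + Complex.I*γ‖) := Real.sqrt_le_sqrt h1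

lemma deriv_norm_le (hγ : 0 < γ) (hw : w ∈ Finf) (hRpos : 0 < R) (hR6 : 600 ≤ R * Real.sqrt γ) :
    ‖Complex.I * (-2 / sqm (w^2 + Complex.I*γ)) / (2*(R:ℂ))‖ ≤ 1/2 := by
  have hsg : 0 < Real.sqrt γ := Real.sqrt_pos.mpr hγ
  have hsabs := abs_sqm_ge hγ hw
  have hspos : 0 < ‖sqm (w^2 + Complex.I*γ)‖ := by linarith
  have hval : ‖Complex.I * (-2 / sqm (w^2 + Complex.I*γ)) / (2*(R:ℂ))‖
      = 2 / (‖sqm (w^2 + Complex.I*γ)‖ * (2*R)) := by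
    rw [norm_div, norm_mul, Complex.norm_I, one_mul, norm_div, norm_neg,
      Complex.norm_two, norm_mul, Complex.norm_two, Complex.norm_real, Real.norm_eq_abs, _root_.abs_of_pos hRpos]
    ring
  rw [hval, div_le_div_iff₀ (by positivity) (by norm_num)]
  nlinarith

end Infra

section Main

variable {γ R : ℝ} {w : ℂ} {j : ℤ}

lemma hasDerivAt_Gc (hγ : 0 < γ) (hw : w ∈ Finf) (j : ℤ) (R : ℝ) :
    HasDerivAt (fun w => (Complex.I * Complex.log (hfun γ w) - 2*Real.pi*(j:ℂ)) / (2*(R:ℂ)))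
      (Complex.I * (-2 / sqm (w^2 + Complex.I*γ)) / (2*(R:ℂ))) w :=
  (((hasDerivAt_loghfun hγ hw).const_mul Complex.I).sub_const _).div_const _

lemma Gmaps (hγ : 0 < γ) (hRpos : 0 < R) (hR6 : 600 ≤ R * Real.sqrt γ) (hj : 1 ≤ j)
    (hw : w ∈ Finf) (hball : ‖w‖ ≤ 2*Real.pi*(j:ℝ)/R) :
    Gfun γ j R w ∈ Finf ∧ ‖Gfun γ j R w‖ ≤ 2*Real.pi*(j:ℝ)/R := by
  have hπ := Real.pi_pos
  have hj' : (1:ℝ) ≤ (j:ℝ) := by exact_mod_cast hj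
  have hsg : 0 < Real.sqrt γ := Real.sqrt_pos.mpr hγ
  have hA0 := Afun_nonneg hγ hw
  have hBl := Bfun_lb hγ hw hj
  have hBu := Bfun_ub hγ hw (j := j)
  have hBpos : 0 < Bfun γ j w := by nlinarith
  have hball' : ‖w‖ * R ≤ 2*Real.pi*(j:ℝ) := (le_div_iff₀ hRpos).mp hball
  have hA : Afun γ w ≤ Real.pi * j / 75 := by
    have h1 := Afun_le hγ hw
    have h2 : 4 * ‖w‖ / Real.sqrt γ ≤ Real.pi * j / 75 := by
      rw [div_le_div_iff₀ hsg (by norm_num)]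
      have h3 : ‖w‖ * 600 ≤ ‖w‖ * (R * Real.sqrt γ) :=
        mul_le_mul_of_nonneg_left hR6 (norm_nonneg w)
      have h4 : ‖w‖ * R * Real.sqrt γ ≤ 2*Real.pi*(j:ℝ) * Real.sqrt γ :=
        mul_le_mul_of_nonneg_right hball' hsg.le
      nlinarith
    linarith
  have h2A : 2 * Afun γ w ≤ Bfun γ j w := by nlinarith
  constructor
  · refine ⟨?_, ?_, ?_⟩
    · rw [Gfun_re]
      apply div_nonpos_of_nonpos_of_nonneg <;> linarith
    · rw [Gfun_im]
      positivity
    · rw [Gfun_re, Gfun_im, abs_of_nonpos (by apply div_nonpos_of_nonpos_of_nonneg <;> linarith)]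
      rw [show -(-Bfun γ j w / (2*R)) = Bfun γ j w / (2*R) by ring]
      calc 2 * (Afun γ w / (2*R)) = (2 * Afun γ w) / (2*R) := by ring
      _ ≤ Bfun γ j w / (2*R) := (div_le_div_iff_of_pos_right (by positivity)).mpr h2A
  · have htri := Complex.norm_le_abs_re_add_abs_im (Gfun γ j R w)
    rw [Gfun_re, Gfun_im, abs_of_nonpos (by apply div_nonpos_of_nonpos_of_nonneg <;> linarith),
      _root_.abs_of_nonneg (by positivity)] at htri
    have hsum : Bfun γ j w + Afun γ w ≤ 4 * Real.pi * (j:ℝ) := by nlinarith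
    calc ‖Gfun γ j R w‖ ≤ -(-Bfun γ j w / (2*R)) + Afun γ w / (2*R) := htri
    _ = (Bfun γ j w + Afun γ w) / (2*R) := by ring
    _ ≤ (4 * Real.pi * (j:ℝ)) / (2*R) := by
        exact (div_le_div_iff_of_pos_right (by positivity)).mpr hsum
    _ = 2*Real.pi*(j:ℝ)/R := by ring

lemma fixed_in_ball (hγ : 0 < γ) (hRpos : 0 < R) (hR6 : 600 ≤ R * Real.sqrt γ) (hj : 1 ≤ j)
    (hw : w ∈ Finf) (hfix : w = Gfun γ j R w) :
    ‖w‖ ≤ 2*Real.pi*(j:ℝ)/R := by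
  have hπ := Real.pi_pos
  have hj' : (1:ℝ) ≤ (j:ℝ) := by exact_mod_cast hj
  have hsg : 0 < Real.sqrt γ := Real.sqrt_pos.mpr hγ
  have hA0 := Afun_nonneg hγ hw
  have hBl := Bfun_lb hγ hw hj
  have hBu := Bfun_ub hγ hw (j := j)
  have hBpos : 0 < Bfun γ j w := by nlinarith
  have hAle := Afun_le hγ hw
  have htri := Complex.norm_le_abs_re_add_abs_im (Gfun γ j R w)
  rw [Gfun_re, Gfun_im, abs_of_nonpos (by apply div_nonpos_of_nonpos_of_nonneg <;> linarith),
    _root_.abs_of_nonneg (by positivity)] at htri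
  have h5 : ‖w‖ ≤ -(-Bfun γ j w / (2*R)) + Afun γ w / (2*R) := by
    rw [show ‖w‖ = ‖Gfun γ j R w‖ by rw [← hfix]]
    exact htri
  have h5' : ‖w‖ ≤ (Bfun γ j w + Afun γ w) / (2*R) := by
    calc ‖w‖ ≤ -(-Bfun γ j w / (2*R)) + Afun γ w / (2*R) := h5
    _ = (Bfun γ j w + Afun γ w) / (2*R) := by ring
  have h6 : ‖w‖ * (2*R) ≤ Bfun γ j w + Afun γ w := by
    rw [← le_div_iff₀ (by positivity : (0:ℝ) < 2*R)]
    exact h5'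
  have h4 : 4 * ‖w‖ / Real.sqrt γ ≤ ‖w‖ * R / 150 := by
    rw [div_le_div_iff₀ hsg (by norm_num)]
    have h3 : ‖w‖ * 600 ≤ ‖w‖ * (R * Real.sqrt γ) :=
      mul_le_mul_of_nonneg_left hR6 (norm_nonneg w)
    nlinarith
  rw [le_div_iff₀ hRpos]
  nlinarith

end Main

theorem fixed_point_exists_unique'
    (γ R : ℝ) (hγ : 0 < γ)
    (hR : 600 * (γ ^ ((3 : ℝ) / 4) + γ ^ (-(3 : ℝ) / 4)) ≤ R) :
    (∀ j : ℤ, 1 ≤ j → ∃! w : ℂ, w ∈ Finf ∧ w = Gfun γ j R w) ∧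
    (∀ j : ℤ, 1 ≤ j → ∀ w : ℂ, w ∈ Finf ∧ w = Gfun γ j R w → w ∈ Fj γ j) ∧
    (∀ j j' : ℤ, 1 ≤ j → 1 ≤ j' → j ≠ j' →
      ∀ w w' : ℂ, (w ∈ Finf ∧ w = Gfun γ j R w) → (w' ∈ Finf ∧ w' = Gfun γ j' R w') →
        w ≠ w') := by
  have hRpos : 0 < R := Rpos hγ hR
  have hR6 : 600 ≤ R * Real.sqrt γ := R_sqrt_ge hγ hR
  have hπ := Real.pi_pos
  have mem_ball_iff : ∀ (r : ℝ) (z : ℂ), z ∈ Metric.closedBall (0:ℂ) r ↔ ‖z‖ ≤ r := by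
    intro r z
    rw [Metric.mem_closedBall, Complex.dist_eq, sub_zero]
  have hlip : ∀ j : ℤ, 1 ≤ j → ∀ x ∈ Finf ∩ Metric.closedBall (0:ℂ) (2*Real.pi*(j:ℝ)/R),
      ∀ y ∈ Finf ∩ Metric.closedBall (0:ℂ) (2*Real.pi*(j:ℝ)/R),
      ‖Gfun γ j R y - Gfun γ j R x‖ ≤ (1/2) * ‖y - x‖ := by
    intro j hj x hx y hy
    have hXconv : Convex ℝ (Finf ∩ Metric.closedBall (0:ℂ) (2*Real.pi*(j:ℝ)/R)) :=
      convex_Finf.inter (convex_closedBall _ _)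
    rw [Gfun_eq_log hγ hy.1, Gfun_eq_log hγ hx.1]
    have hmvt := Convex.norm_image_sub_le_of_norm_hasDerivWithin_le
      (f := fun z : ℂ => (Complex.I * Complex.log (hfun γ z) - 2*Real.pi*(j:ℂ)) / (2*(R:ℂ)))
      (f' := fun z : ℂ => Complex.I * (-2 / sqm (z^2 + Complex.I*γ)) / (2*(R:ℂ)))
      (C := 1/2)
      (fun z hz => (hasDerivAt_Gc hγ hz.1 j R).hasDerivWithinAt)
      (fun z hz => deriv_norm_le hγ hz.1 hRpos hR6) hXconv hx hy
    exact hmvt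
  refine ⟨?_, ?_, ?_⟩
  · intro j hj
    have hj' : (1:ℝ) ≤ (j:ℝ) := by exact_mod_cast hj
    set ρ := 2*Real.pi*(j:ℝ)/R with hρ
    have hρ0 : 0 ≤ ρ := by positivity
    set X := Finf ∩ Metric.closedBall (0:ℂ) ρ with hX
    have hXclosed : IsClosed X := closed_Finf.inter Metric.isClosed_closedBall
    haveI : Nonempty X := ⟨⟨0, zero_mem_Finf, by rw [mem_ball_iff]; simpa using hρ0⟩⟩
    haveI : CompleteSpace X := hXclosed.completeSpace_coe
    have hmapX : ∀ z : ℂ, z ∈ X → Gfun γ j R z ∈ X := by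
      intro z hz
      have := Gmaps hγ hRpos hR6 hj hz.1 ((mem_ball_iff ρ z).mp hz.2)
      exact ⟨this.1, (mem_ball_iff ρ _).mpr this.2⟩
    set T : X → X := fun x => ⟨Gfun γ j R x, hmapX x x.2⟩ with hTdef
    have hcontr : ContractingWith (1/2 : NNReal) T := by
      refine ⟨by rw [← NNReal.coe_lt_coe]; norm_num, LipschitzWith.of_dist_le_mul fun x y => ?_⟩
      rw [Subtype.dist_eq, Subtype.dist_eq, dist_eq_norm, dist_eq_norm]
      calc ‖(T x : ℂ) - (T y : ℂ)‖ = ‖Gfun γ j R x - Gfun γ j R y‖ := rfl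
      _ ≤ (1/2) * ‖(x:ℂ) - (y:ℂ)‖ := hlip j hj (y:ℂ) y.2 (x:ℂ) x.2
      _ = ((1/2 : NNReal) : ℝ) * ‖(x:ℂ) - (y:ℂ)‖ := by congr 1
    set z := ContractingWith.fixedPoint T hcontr with hzdef
    have hzfix : Gfun γ j R (z:ℂ) = (z:ℂ) :=
      congrArg Subtype.val (hcontr.fixedPoint_isFixedPt)
    refine ⟨(z:ℂ), ⟨z.2.1, hzfix.symm⟩, ?_⟩
    intro y hy
    obtain ⟨hyF, hyfix⟩ := hy
    have hyX : y ∈ X :=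
      ⟨hyF, (mem_ball_iff ρ y).mpr (fixed_in_ball hγ hRpos hR6 hj hyF hyfix)⟩
    have h12 := hlip j hj (z:ℂ) z.2 y hyX
    rw [← hyfix, hzfix] at h12
    have hn : ‖y - (z:ℂ)‖ ≤ 0 := by linarith [norm_nonneg (y - (z:ℂ))]
    have := norm_le_zero_iff.mp hn
    exact sub_eq_zero.mp this
  · intro j hj w hw
    obtain ⟨hwF, hfix⟩ := hw
    have hBpos : 0 < Bfun γ j w := Bfun_pos hγ hwF hj
    have hre := congrArg Complex.re hfix
    have him := congrArg Complex.im hfix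
    rw [Gfun_re] at hre
    rw [Gfun_im] at him
    have hA0 : 0 ≤ Afun γ w := Afun_nonneg hγ hwF
    refine ⟨hwF, ?_⟩
    rw [_root_.abs_of_nonneg hA0]
    have h1 := hwF.2.2
    rw [hre, him, abs_of_nonpos (by
      apply div_nonpos_of_nonpos_of_nonneg <;> linarith)] at h1
    have h2 : (2 * Afun γ w) / (2*R) ≤ Bfun γ j w / (2*R) := by
      calc (2 * Afun γ w) / (2*R) = 2 * (Afun γ w / (2*R)) := by ring
      _ ≤ -(-Bfun γ j w / (2*R)) := h1
      _ = Bfun γ j w / (2*R) := by ring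
    exact (div_le_div_iff_of_pos_right (by positivity : (0:ℝ) < 2*R)).mp h2
  · rintro j j' hj hj' hne w w' ⟨hwF, hwfix⟩ ⟨hw'F, hw'fix⟩ heq
    apply hne
    have h1 : Gfun γ j R w = Gfun γ j' R w := by
      rw [← hwfix, heq]
      exact hw'fix
    have h2 := congrArg Complex.re h1
    rw [Gfun_re, Gfun_re] at h2
    have h3 : Bfun γ j w = Bfun γ j' w := by
      have h2R : (0:ℝ) < 2*R := by positivity
      field_simp at h2
      linarith
    rw [Bfun, Bfun] at h3
    have hπ0 : Real.pi ≠ 0 := Real.pi_ne_zero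
    field_simp at h3
    exact_mod_cast (mul_left_cancel₀ (by positivity : (2*Real.pi) ≠ 0) (add_left_cancel h3))

/-- For `γ > 0` and `R ≥ 600(γ^{3/4} + γ^{−3/4})`, each equation `w = G_{j,R}(w)`
(`j ≥ 1`) has exactly one solution in `F_∞`; this solution lies in `F_j`, and the
solutions for distinct `j` are distinct. -/
theorem fixed_point_exists_unique
    (γ R : ℝ) (hγ : 0 < γ)
    (hR : 600 * (γ ^ ((3 : ℝ) / 4) + γ ^ (-(3 : ℝ) / 4)) ≤ R) :
    (∀ j : ℤ, 1 ≤ j → ∃! w : ℂ, w ∈ Finf ∧ w = Gfun γ j R w) ∧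
    (∀ j : ℤ, 1 ≤ j → ∀ w : ℂ, w ∈ Finf ∧ w = Gfun γ j R w → w ∈ Fj γ j) ∧
    (∀ j j' : ℤ, 1 ≤ j → 1 ≤ j' → j ≠ j' →
      ∀ w w' : ℂ, (w ∈ Finf ∧ w = Gfun γ j R w) → (w' ∈ Finf ∧ w' = Gfun γ j' R w') →
        w ≠ w') := by
  exact fixed_point_exists_unique' γ R hγ hR
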